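/- Let g : ℝ^n → ℝ be convex differentiable and monotone increasing on ℝ^n_+ (∇g ≥ 0 there) with g(0) < 0, and suppose [∇g(x)]_{supp(x)} ≠ 0 for every nonzero x ∈ ℝ^n_+. Let Q₊ = {x ∈ ℝ^n : g(x) ≤ 0, x ≥ 0}, s ∈ {1,...,n-1}, and x ∈ Q₊ with ‖x‖₀ < s. If v ∈ ℝ^n satisfies v_T ∈ N_{(Q₊)_T}(x_T) for every index set T ⊇ supp(x) with |T| = s, then v ∈ N_{Q₊}(x). -/

import Mathlib

open scoped RealInnerProductSpace

noncomputable section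

/-- Euclidean space ℝ^n. -/
abbrev E (n : ℕ) := EuclideanSpace ℝ (Fin n)

/-- Support of a vector, as a finset. -/
def spt {n : ℕ} (x : E n) : Finset (Fin n) := Finset.univ.filter (fun i => x i ≠ 0)

/-- A set is symmetric if it is invariant under coordinate permutations. -/
def IsSymmSet {n : ℕ} (X : Set (E n)) : Prop :=
  ∀ x ∈ X, ∀ σ : Equiv.Perm (Fin n), (WithLp.toLp 2 (fun i => x (σ i)) : E n) ∈ X

/-- A set is sign-free symmetric if it is symmetric and invariant under sign flips. -/
def IsSignFreeSymmSet {n : ℕ} (X : Set (E n)) : Prop :=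
  IsSymmSet X ∧ ∀ x ∈ X, ∀ ε : Fin n → ℝ, (∀ i, ε i = 1 ∨ ε i = -1) →
    (WithLp.toLp 2 (fun i => ε i * x i) : E n) ∈ X

/-- A set is nonnegative symmetric if it is symmetric and contained in ℝ^n_+. -/
def IsNonnegSymmSet {n : ℕ} (X : Set (E n)) : Prop :=
  IsSymmSet X ∧ ∀ x ∈ X, ∀ i, 0 ≤ x i

/-- `y` is a (Euclidean) projection of `x` onto `X`. -/
def IsProj {n : ℕ} (X : Set (E n)) (x y : E n) : Prop :=
  y ∈ X ∧ ∀ z ∈ X, ‖y - x‖ ≤ ‖z - x‖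

/-- The set of s-sparse vectors. -/
def Cs (n s : ℕ) : Set (E n) := {x | (spt x).card ≤ s}

/-- Derivative of `g` along the line through `x` in direction `d`. -/
lemma lineDeriv' {n : ℕ} {g : E n → ℝ} {γ : E n} {x : E n} (h : HasGradientAt g γ x)
    (d : E n) : HasDerivAt (fun t : ℝ => g (x + t • d)) ⟪γ, d⟫ 0 := by
  have hc : HasDerivAt (fun t : ℝ => x + t • d) d (0 : ℝ) := by
    simpa using ((hasDerivAt_id (0 : ℝ)).smul_const d).const_add x
  have h2 := (h.hasFDerivAt.comp_hasDerivAt_of_eq 0 hc (by simp))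
  simp [InnerProductSpace.toDual_apply_apply] at h2
  exact h2

/-- If a function has negative derivative at 0, it decreases just to the right of 0. -/
lemma eventually_lt' {φ : ℝ → ℝ} {L : ℝ} (h : HasDerivAt φ L 0) (hL : L < 0) :
    ∀ᶠ t in nhdsWithin 0 (Set.Ioi 0), φ t < φ 0 := by
  have hs := (hasDerivAt_iff_tendsto_slope.1 h)
  have hs2 : Filter.Tendsto (slope φ 0) (nhdsWithin 0 (Set.Ioi 0)) (nhds L) :=
    hs.mono_left (nhdsWithin_mono _ (by intro t ht; simpa using (ne_of_gt ht)))
  have := hs2.eventually_lt_const hL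
  filter_upwards [this, self_mem_nhdsWithin] with t h1 h2
  have ht : (0:ℝ) < t := h2
  have h3 : t⁻¹ * (φ t - φ 0) < 0 := by simpa [slope, ht.ne'] using h1
  have h4 : t * (t⁻¹ * (φ t - φ 0)) < t * 0 := mul_lt_mul_of_pos_left h3 ht
  rw [← mul_assoc, mul_inv_cancel₀ ht.ne', one_mul, mul_zero] at h4
  linarith

/-- The gradient inequality for convex functions. -/
lemma grad_ineq' {n : ℕ} {g : E n → ℝ} (hg : ConvexOn ℝ Set.univ g) {γ : E n} {x : E n}
    (h : HasGradientAt g γ x) (y : E n) : g x + ⟪γ, y - x⟫ ≤ g y := by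
  have hd := lineDeriv' h (y - x)
  have hs := (hasDerivAt_iff_tendsto_slope.1 hd)
  have hs2 : Filter.Tendsto (slope (fun t : ℝ => g (x + t • (y - x))) 0)
      (nhdsWithin 0 (Set.Ioi 0)) (nhds ⟪γ, y - x⟫) :=
    hs.mono_left (nhdsWithin_mono _ (by intro t ht; simpa using (ne_of_gt ht)))
  have hb : ∀ᶠ t in nhdsWithin (0:ℝ) (Set.Ioi 0),
      slope (fun t : ℝ => g (x + t • (y - x))) 0 t ≤ g y - g x := by
    filter_upwards [Ioo_mem_nhdsGT_of_mem (by norm_num : (0:ℝ) ∈ Set.Ico 0 1),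
      self_mem_nhdsWithin] with t ht ht0
    have ht1 : t < 1 := ht.2
    have htpos : (0:ℝ) < t := ht0
    have hconv := hg.2 (Set.mem_univ x) (Set.mem_univ y)
      (by linarith : (0:ℝ) ≤ 1 - t) (le_of_lt htpos) (by ring)
    have hxy : x + t • (y - x) = (1 - t) • x + t • y := by module
    have : g (x + t • (y - x)) ≤ (1 - t) * g x + t * g y := by
      rw [hxy]; simpa using hconv
    rw [slope_def_field]
    simp only [sub_zero, zero_smul, add_zero]
    rw [div_le_iff₀ htpos]
    nlinarith
  have := le_of_tendsto hs2 hb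
  linarith

lemma eps_le_zero' (A B : ℝ) (h : ∀ ε : ℝ, 0 < ε → A ≤ ε * B) : A ≤ 0 := by
  by_contra hc
  push_neg at hc
  have hB : B ≤ |B| := le_abs_self B
  have hBpos : (0:ℝ) < |B| + 1 := by positivity
  have := h (A / (2 * (|B| + 1))) (by positivity)
  have h2 : A / (2 * (|B| + 1)) * B ≤ A / (2 * (|B| + 1)) * (|B| + 1) := by
    apply mul_le_mul_of_nonneg_left (by linarith) (by positivity)
  have h3 : A / (2 * (|B| + 1)) * (|B| + 1) = A / 2 := by field_simp
  rw [h3] at h2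
  linarith

lemma inner_eq_sum' {n : ℕ} (a b : E n) : ⟪a, b⟫ = ∑ i, a i * b i := by
  simp [PiLp.inner_apply, RCLike.inner_apply, conj_trivial, mul_comm]

theorem stmt18 {n s : ℕ} (g : E n → ℝ) (hg : ConvexOn ℝ Set.univ g)
    (g' : E n → E n) (hgrad : ∀ x, HasGradientAt g (g' x) x)
    (hmono : ∀ x : E n, (∀ i, 0 ≤ x i) → ∀ i, 0 ≤ g' x i)
    (hg0 : g 0 < 0)
    (hsupp : ∀ x : E n, (∀ i, 0 ≤ x i) → x ≠ 0 → ∃ i, x i ≠ 0 ∧ g' x i ≠ 0)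
    (hs1 : 1 ≤ s) (hs2 : s < n)
    (x : E n) (hxQ : g x ≤ 0 ∧ ∀ i, 0 ≤ x i) (hcard : (spt x).card < s)
    (v : E n)
    (hv : ∀ T : Finset (Fin n), spt x ⊆ T → T.card = s →
      ∀ y : E n, (g y ≤ 0 ∧ ∀ i, 0 ≤ y i) → (∀ i ∉ T, y i = 0) →
        ⟪v, y - x⟫ ≤ 0) :
    ∀ y : E n, (g y ≤ 0 ∧ ∀ i, 0 ≤ y i) → ⟪v, y - x⟫ ≤ 0 := by
  intro y hy
  set γ := g' x with hγdef
  have hγpos : ∀ i, 0 ≤ γ i := hmono x hxQ.2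
  have hcardn : s ≤ Fintype.card (Fin n) := by simpa using hs2.le
  -- existence of a superset T of the support containing a given index
  have hT : ∀ i : Fin n, ∃ T : Finset (Fin n), spt x ⊆ T ∧ i ∈ T ∧ T.card = s := by
    intro i
    have h1 : (insert i (spt x)).card ≤ s :=
      le_trans (Finset.card_insert_le _ _) (Nat.succ_le_of_lt hcard)
    obtain ⟨T, hsub, hcardT⟩ := Finset.exists_superset_card_eq h1 hcardn
    exact ⟨T, (Finset.subset_insert _ _).trans hsub,
      hsub (Finset.mem_insert_self _ _), hcardT⟩
  -- key lemma: feasible sparse directions give nonpositive inner product with v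
  have key : ∀ (d : E n) (T : Finset (Fin n)), spt x ⊆ T → T.card = s →
      (∀ j ∉ T, d j = 0) → (∀ j, x j = 0 → 0 ≤ d j) →
      (g x < 0 ∨ ⟪γ, d⟫ < 0) → ⟪v, d⟫ ≤ 0 := by
    intro d T hST hTcard hdT hdpos hcase
    have hg0' : ∀ᶠ t in nhdsWithin (0:ℝ) (Set.Ioi 0), g (x + t • d) ≤ 0 := by
      rcases hcase with hlt | hder
      · have hco : ContinuousAt g x := (hgrad x).hasFDerivAt.differentiableAt.continuousAt
        have hline : Continuous (fun t : ℝ => x + t • d) :=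
          continuous_const.add (continuous_id.smul continuous_const)
        have hten : Filter.Tendsto (fun t : ℝ => g (x + t • d)) (nhds 0) (nhds (g x)) := by
          have h2 : Filter.Tendsto (fun t : ℝ => x + t • d) (nhds 0) (nhds x) := by
            have := hline.tendsto 0
            simpa using this
          exact (hco.tendsto).comp h2
        have := hten.eventually_lt_const hlt
        exact ((this.filter_mono nhdsWithin_le_nhds).mono (fun t h => le_of_lt h))
      · have hev := eventually_lt' (lineDeriv' (hgrad x) d) hder
        filter_upwards [hev] with t ht
        have h0 : g (x + (0:ℝ) • d) = g x := by simp
        have := lt_of_lt_of_le (lt_of_lt_of_eq ht h0) hxQ.1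
        exact le_of_lt this
    have hpos' : ∀ᶠ t in nhdsWithin (0:ℝ) (Set.Ioi 0), ∀ i, 0 ≤ x i + t * d i := by
      rw [Filter.eventually_all]
      intro i
      by_cases hxi : x i = 0
      · filter_upwards [self_mem_nhdsWithin] with t ht
        have h1 : 0 ≤ t * d i := mul_nonneg (le_of_lt ht) (hdpos i hxi)
        rw [hxi]; linarith
      · have hxipos : 0 < x i := lt_of_le_of_ne (hxQ.2 i) (Ne.symm hxi)
        have hten : Filter.Tendsto (fun t : ℝ => x i + t * d i) (nhds 0) (nhds (x i)) := by
          have hcont : Continuous fun t : ℝ => x i + t * d i :=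
            continuous_const.add (continuous_id.mul continuous_const)
          simpa using hcont.tendsto 0
        exact ((hten.eventually_const_lt hxipos).filter_mono nhdsWithin_le_nhds).mono
          (fun t h => le_of_lt h)
    obtain ⟨t, ⟨htg, htpos'⟩, htmem⟩ :=
      ((hg0'.and hpos').and self_mem_nhdsWithin).exists
    have htpos : (0:ℝ) < t := htmem
    have happ := hv T hST hTcard (x + t • d)
      ⟨htg, by intro i; simpa [PiLp.add_apply, PiLp.smul_apply, smul_eq_mul] using htpos' i⟩
      (by
        intro i hiT
        have hxi : x i = 0 := by
          by_contra hne
          exact hiT (hST (by simp [spt, hne]))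
        have hdi : d i = 0 := hdT i hiT
        simp [PiLp.add_apply, PiLp.smul_apply, smul_eq_mul, hxi, hdi])
    rw [add_sub_cancel_left, real_inner_smul_right] at happ
    nlinarith
  rcases eq_or_lt_of_le hxQ.1 with hgx0 | hgxlt
  · -- case g x = 0
    have hxne : x ≠ 0 := by
      intro h; rw [h] at hgx0; rw [hgx0] at hg0; exact lt_irrefl 0 hg0
    obtain ⟨i₀, hxi₀, hγi₀⟩ := hsupp x hxQ.2 hxne
    have hγi₀pos : 0 < γ i₀ := lt_of_le_of_ne (hγpos i₀) (Ne.symm hγi₀)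
    have key3 : ∀ (i : Fin n) (a b : ℝ), (x i = 0 → 0 ≤ a) →
        γ i * a - γ i₀ * b < 0 → v i * a - v i₀ * b ≤ 0 := by
      intro i a b ha hlt
      obtain ⟨T, hsub, hiT, hcardT⟩ := hT i
      have hi₀T : i₀ ∈ T := hsub (by simp [spt, hxi₀])
      set d : E n := EuclideanSpace.single i a - EuclideanSpace.single i₀ b with hd
      have hvd : ⟪v, d⟫ = v i * a - v i₀ * b := by
        simp [hd, inner_sub_right, EuclideanSpace.inner_single_right, mul_comm]
      have hγd : ⟪γ, d⟫ = γ i * a - γ i₀ * b := by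
        simp [hd, inner_sub_right, EuclideanSpace.inner_single_right, mul_comm]
      have := key d T hsub hcardT
        (by
          intro j hjT
          have hji : j ≠ i := fun h => hjT (h ▸ hiT)
          have hji₀ : j ≠ i₀ := fun h => hjT (h ▸ hi₀T)
          simp [hd, PiLp.sub_apply, EuclideanSpace.single_apply, hji, hji₀])
        (by
          intro j hxj
          have hji₀ : j ≠ i₀ := fun h => hxi₀ (h ▸ hxj)
          by_cases hji : j = i
          · subst hji
            simp [hd, PiLp.sub_apply, EuclideanSpace.single_apply, hji₀, ha hxj]
          · simp [hd, PiLp.sub_apply, EuclideanSpace.single_apply, hji, hji₀])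
        (Or.inr (by rw [hγd]; exact hlt))
      rw [hvd] at this
      exact this
    have hvi₀ : 0 ≤ v i₀ := by
      have := key3 i₀ 0 1 (fun _ => le_refl 0) (by nlinarith)
      nlinarith
    have hub : ∀ i, v i * γ i₀ ≤ v i₀ * γ i := by
      intro i
      have := eps_le_zero' (v i * γ i₀ - v i₀ * γ i) (v i₀) (by
        intro ε hε
        have := key3 i (γ i₀) (γ i + ε) (fun _ => hγpos i₀) (by nlinarith)
        nlinarith)
      linarith
    have hlb : ∀ i, x i ≠ 0 → v i₀ * γ i ≤ v i * γ i₀ := by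
      intro i hxi
      have := eps_le_zero' (v i₀ * γ i - v i * γ i₀) (v i₀) (by
        intro ε hε
        have := key3 i (-γ i₀) (-γ i + ε) (fun h => absurd h hxi) (by nlinarith)
        nlinarith)
      linarith
    have hgi := grad_ineq' hg (hgrad x) y
    have hγyx : ⟪γ, y - x⟫ ≤ 0 := by
      rw [hgx0] at hgi; linarith [hy.1]
    have hsum : γ i₀ * ⟪v, y - x⟫ ≤ v i₀ * ⟪γ, y - x⟫ := by
      rw [inner_eq_sum', inner_eq_sum', Finset.mul_sum, Finset.mul_sum]
      apply Finset.sum_le_sum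
      intro i _
      have hyx : (y - x) i = y i - x i := rfl
      rw [hyx]
      by_cases hxi : x i = 0
      · have h0 : 0 ≤ y i - x i := by rw [hxi]; simpa using hy.2 i
        nlinarith [mul_nonneg (sub_nonneg.2 (hub i)) h0]
      · have heq : v i * γ i₀ = v i₀ * γ i := le_antisymm (hub i) (hlb i hxi)
        have : γ i₀ * (v i * (y i - x i)) = v i₀ * (γ i * (y i - x i)) := by
          linear_combination (y i - x i) * heq
        linarith
    have h2 : v i₀ * ⟪γ, y - x⟫ ≤ 0 := mul_nonpos_of_nonneg_of_nonpos hvi₀ hγyx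
    have h3 : γ i₀ * ⟪v, y - x⟫ ≤ γ i₀ * 0 := by rw [mul_zero]; exact le_trans hsum h2
    exact le_of_mul_le_mul_left h3 hγi₀pos
  · -- case g x < 0
    have keyS : ∀ (i : Fin n) (c : ℝ), (x i = 0 → 0 ≤ c) → v i * c ≤ 0 := by
      intro i c hc
      obtain ⟨T, hsub, hiT, hcardT⟩ := hT i
      have := key (EuclideanSpace.single i c) T hsub hcardT
        (by
          intro j hjT
          have hji : j ≠ i := fun h => hjT (h ▸ hiT)
          simp [EuclideanSpace.single_apply, hji])
        (by
          intro j hxj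
          by_cases hji : j = i
          · subst hji; simp [EuclideanSpace.single_apply, hc hxj]
          · simp [EuclideanSpace.single_apply, hji])
        (Or.inl hgxlt)
      rw [EuclideanSpace.inner_single_right] at this
      simpa [mul_comm] using this
    rw [inner_eq_sum']
    apply Finset.sum_nonpos
    intro i _
    have hyx : (y - x) i = y i - x i := rfl
    rw [hyx]
    by_cases hxi : x i = 0
    · have h1 : v i ≤ 0 := by have := keyS i 1 (fun _ => zero_le_one); linarith
      have h2 : 0 ≤ y i - x i := by rw [hxi]; simpa using hy.2 i
      exact mul_nonpos_of_nonpos_of_nonneg h1 h2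
    · have h1 : v i ≤ 0 := by have := keyS i 1 (fun h => absurd h hxi); linarith
      have h2 : 0 ≤ v i := by have := keyS i (-1) (fun h => absurd h hxi); linarith
      have : v i = 0 := le_antisymm h1 h2
      simp [this]
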